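/- Let Γ = SL₂(ℤ) act on L̂ = {(a,b,c,d) ∈ ℤ⁴ : 3 ∣ b, 3 ∣ c} by the twisted action, and let L̂₀ = {x ∈ L̂ : D(x) = 0}. Then L̂₀ is the disjoint union L̂₀ = {0} ⊔ ⨆_{m≥1} ⨆_{γ ∈ Γ/(Γ∩N)} {γ·(0,0,0,m)} ⊔ ⨆_{m≥1} ⨆_{0≤n<3m} ⨆_{γ ∈ Γ} {γ·(0,0,3m,n)}; that is, every nonzero x ∈ L̂₀ is either of the form γ·(0,0,0,m) for a unique integer m ≥ 1 and a unique coset γ(Γ∩N) ∈ Γ/(Γ∩N), or of the form γ·(0,0,3m,n) for a unique triple (m,n,γ) with m ≥ 1, 0 ≤ n < 3m, γ ∈ Γ, and never both. -/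

import Mathlib

/-- The action of an integer 2×2 matrix `γ` on the coefficient vector `x = (a,b,c,d)` of the
integral binary cubic form `a u³ + b u²v + c uv² + d v³`, given by `(γ·f)(u,v) = f((u,v)·γ)`. -/
def cubicAct (g : Matrix (Fin 2) (Fin 2) ℤ) (x : Fin 4 → ℤ) : Fin 4 → ℤ :=
  ![x 0 * g 0 0 ^ 3 + x 1 * g 0 0 ^ 2 * g 0 1 + x 2 * g 0 0 * g 0 1 ^ 2 + x 3 * g 0 1 ^ 3,
    3 * x 0 * g 0 0 ^ 2 * g 1 0 + x 1 * (g 0 0 ^ 2 * g 1 1 + 2 * g 0 0 * g 0 1 * g 1 0)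
      + x 2 * (2 * g 0 0 * g 0 1 * g 1 1 + g 1 0 * g 0 1 ^ 2) + 3 * x 3 * g 0 1 ^ 2 * g 1 1,
    3 * x 0 * g 0 0 * g 1 0 ^ 2 + x 1 * (2 * g 0 0 * g 1 0 * g 1 1 + g 1 0 ^ 2 * g 0 1)
      + x 2 * (g 0 0 * g 1 1 ^ 2 + 2 * g 1 0 * g 0 1 * g 1 1) + 3 * x 3 * g 0 1 * g 1 1 ^ 2,
    x 0 * g 1 0 ^ 3 + x 1 * g 1 0 ^ 2 * g 1 1 + x 2 * g 1 0 * g 1 1 ^ 2 + x 3 * g 1 1 ^ 3]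

/-- The discriminant of the binary cubic form with coefficients `(a,b,c,d)`. -/
def cubicDisc (x : Fin 4 → ℤ) : ℤ :=
  x 1 ^ 2 * x 2 ^ 2 + 18 * x 0 * x 1 * x 2 * x 3 - 4 * x 0 * x 2 ^ 3 - 4 * x 1 ^ 3 * x 3
    - 27 * x 0 ^ 2 * x 3 ^ 2

/-- `x` is of type I : `x = γ·(0,0,0,m)` for some `m ≥ 1` and `γ ∈ SL₂(ℤ)`. -/
def TypeI (x : Fin 4 → ℤ) : Prop :=
  ∃ (m : ℤ) (γ : Matrix (Fin 2) (Fin 2) ℤ), 1 ≤ m ∧ γ.det = 1 ∧ x = cubicAct γ ![0, 0, 0, m]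

/-- `x` is of type II : `x = γ·(0,0,3m,n)` for some `m ≥ 1`, `0 ≤ n < 3m`, `γ ∈ SL₂(ℤ)`. -/
def TypeII (x : Fin 4 → ℤ) : Prop :=
  ∃ (m n : ℤ) (γ : Matrix (Fin 2) (Fin 2) ℤ),
    1 ≤ m ∧ 0 ≤ n ∧ n < 3 * m ∧ γ.det = 1 ∧ x = cubicAct γ ![0, 0, 3 * m, n]

/-! ### auxiliary lemmas -/

section Aux

lemma sdl_act_mul (g h : Matrix (Fin 2) (Fin 2) ℤ) (x : Fin 4 → ℤ) :
    cubicAct g (cubicAct h x) = cubicAct (g * h) x := by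
  funext i
  fin_cases i <;>
    simp [cubicAct, Matrix.mul_apply, Fin.sum_univ_two] <;> ring

lemma sdl_act_one (x : Fin 4 → ℤ) : cubicAct 1 x = x := by
  funext i
  fin_cases i <;> simp [cubicAct]

lemma sdl_disc_act (g : Matrix (Fin 2) (Fin 2) ℤ) (x : Fin 4 → ℤ) :
    cubicDisc (cubicAct g x) = g.det ^ 6 * cubicDisc x := by
  simp only [cubicDisc, cubicAct, Matrix.det_fin_two]
  simp only [Matrix.cons_val_zero, Matrix.cons_val_one, Matrix.head_cons,
    Matrix.cons_val_two, Matrix.cons_val_three, Matrix.tail_cons]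
  ring

def hess (x : Fin 4 → ℤ) : ℤ × ℤ × ℤ :=
  (x 1 ^ 2 - 3 * x 0 * x 2, x 1 * x 2 - 9 * x 0 * x 3, x 2 ^ 2 - 3 * x 1 * x 3)

def quadAct (g : Matrix (Fin 2) (Fin 2) ℤ) (q : ℤ × ℤ × ℤ) : ℤ × ℤ × ℤ :=
  (q.1 * g 0 0 ^ 2 + q.2.1 * g 0 0 * g 0 1 + q.2.2 * g 0 1 ^ 2,
   2 * q.1 * g 0 0 * g 1 0 + q.2.1 * (g 0 0 * g 1 1 + g 0 1 * g 1 0) + 2 * q.2.2 * g 0 1 * g 1 1,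
   q.1 * g 1 0 ^ 2 + q.2.1 * g 1 0 * g 1 1 + q.2.2 * g 1 1 ^ 2)

lemma sdl_hess_act (g : Matrix (Fin 2) (Fin 2) ℤ) (x : Fin 4 → ℤ) :
    hess (cubicAct g x) = (g.det ^ 2 * (quadAct g (hess x)).1,
      g.det ^ 2 * (quadAct g (hess x)).2.1, g.det ^ 2 * (quadAct g (hess x)).2.2) := by
  simp only [hess, cubicAct, quadAct, Matrix.det_fin_two, Matrix.cons_val_zero,
    Matrix.cons_val_one, Matrix.head_cons, Matrix.cons_val_two, Matrix.cons_val_three,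
    Matrix.tail_cons, Prod.mk.injEq]
  refine ⟨by ring, by ring, by ring⟩

lemma vec4_eq {x y : Fin 4 → ℤ} (h0 : x 0 = y 0) (h1 : x 1 = y 1) (h2 : x 2 = y 2)
    (h3 : x 3 = y 3) : x = y := by
  funext i; fin_cases i <;> assumption

lemma mat2_eq {A B : Matrix (Fin 2) (Fin 2) ℤ} (h0 : A 0 0 = B 0 0) (h1 : A 0 1 = B 0 1)
    (h2 : A 1 0 = B 1 0) (h3 : A 1 1 = B 1 1) : A = B := by
  ext i j; fin_cases i <;> fin_cases j <;> assumption

/-- explicit inverse in `SL₂(ℤ)` -/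
def inv2 (A : Matrix (Fin 2) (Fin 2) ℤ) : Matrix (Fin 2) (Fin 2) ℤ :=
  !![A 1 1, -A 0 1; -A 1 0, A 0 0]

lemma inv2_mul (A : Matrix (Fin 2) (Fin 2) ℤ) (hA : A.det = 1) :
    inv2 A * A = 1 ∧ A * inv2 A = 1 := by
  rw [Matrix.det_fin_two] at hA
  constructor <;> (ext i j; fin_cases i <;> fin_cases j <;>
    simp [inv2, Matrix.mul_apply, Fin.sum_univ_two, Matrix.one_apply] <;> linarith)

lemma inv2_det (A : Matrix (Fin 2) (Fin 2) ℤ) (hA : A.det = 1) : (inv2 A).det = 1 := by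
  rw [Matrix.det_fin_two] at hA
  simp only [inv2, Matrix.det_fin_two_of]
  linarith

lemma sdl_act_cancel {γ γ' : Matrix (Fin 2) (Fin 2) ℤ} {y y' : Fin 4 → ℤ}
    (h : cubicAct γ y = cubicAct γ' y') (hγ : γ.det = 1) :
    y = cubicAct (inv2 γ * γ') y' := by
  rw [← sdl_act_mul, ← h, sdl_act_mul, (inv2_mul γ hγ).1, sdl_act_one]

lemma sdl_act_zero (g : Matrix (Fin 2) (Fin 2) ℤ) : cubicAct g 0 = 0 := by
  funext i; fin_cases i <;> simp [cubicAct]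

end Aux

section Arith

lemma step_sq (a b c : ℤ) (h : b ^ 2 = a * c) (ha : a ≠ 0) :
    ∃ ε p q : ℤ, ε ≠ 0 ∧ p ≠ 0 ∧ IsCoprime p q ∧ a = ε * p ^ 2 ∧ b = ε * p * q ∧ c = ε * q ^ 2 := by
  set g : ℤ := (Int.gcd a b : ℤ) with hgdef
  have hgpos : 0 < Int.gcd a b := Int.gcd_pos_of_ne_zero_left b ha
  have hg : g ≠ 0 := by positivity
  set p := a / g with hp
  set q := b / g with hq
  have hap : a = g * p := (Int.mul_ediv_cancel' (Int.gcd_dvd_left a b)).symm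
  have hbq : b = g * q := (Int.mul_ediv_cancel' (Int.gcd_dvd_right a b)).symm
  have hpq : IsCoprime p q := by
    rw [Int.isCoprime_iff_gcd_eq_one]
    exact Int.gcd_div_gcd_div_gcd hgpos
  have hp0 : p ≠ 0 := by
    intro h0; apply ha; rw [hap, h0, mul_zero]
  have key : g * (g * q ^ 2) = g * (p * c) := by
    rw [hap, hbq] at h; ring_nf; ring_nf at h; linarith
  have key2 : g * q ^ 2 = p * c := mul_left_cancel₀ hg key
  have hdvd : p ∣ g := (hpq.pow_right).dvd_of_dvd_mul_right ⟨c, key2⟩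
  obtain ⟨ε, hε⟩ := hdvd
  refine ⟨ε, p, q, ?_, hp0, hpq, by rw [hap, hε]; ring, by rw [hbq, hε]; ring, ?_⟩
  · intro h0; apply ha; rw [hap, hε, h0, mul_zero, zero_mul]
  · have : p * (ε * q ^ 2) = p * c := by rw [← key2, hε]; ring
    exact (mul_left_cancel₀ hp0 this).symm

lemma step_tc (a B C d : ℤ) (h1 : B ^ 2 = a * C) (h2 : C ^ 2 = B * d) (h3 : B * C = a * d)
    (ha : a ≠ 0) : ∃ m p q : ℤ, m ≠ 0 ∧ IsCoprime p q ∧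
      a = m * p ^ 3 ∧ B = m * p ^ 2 * q ∧ C = m * p * q ^ 2 ∧ d = m * q ^ 3 := by
  obtain ⟨ε, p, q, hε, hp0, hpq, hA, hB, hC⟩ := step_sq a B C h1 ha
  rcases eq_or_ne q 0 with hq0 | hq0
  · subst hq0
    have hu : IsUnit p := isCoprime_zero_right.mp hpq
    have hp2 : p ^ 2 = 1 := Int.isUnit_sq hu
    have hB0 : B = 0 := by rw [hB]; ring
    have hC0 : C = 0 := by rw [hC]; ring
    have hd0 : d = 0 := by
      have h4 := h3; rw [hB0, hC0] at h4
      rcases mul_eq_zero.mp h4.symm with h | h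
      · exact absurd h ha
      · exact h
    refine ⟨ε * p, p, 0, ?_, hpq, ?_, by rw [hB0]; ring, by rw [hC0]; ring, by rw [hd0]; ring⟩
    · exact mul_ne_zero hε hp0
    · rw [hA]; linear_combination (-(ε * p ^ 2)) * hp2
  · have key : ε * (q * (ε * q ^ 3)) = ε * (q * (p * d)) := by
      rw [hC, hB] at h2; ring_nf; ring_nf at h2; linarith
    have key2 : ε * q ^ 3 = p * d := mul_left_cancel₀ hq0 (mul_left_cancel₀ hε key)
    have hdvd : p ∣ ε := (hpq.pow_right (n := 3)).dvd_of_dvd_mul_right ⟨d, key2⟩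
    obtain ⟨m, hm⟩ := hdvd
    have hm0 : m ≠ 0 := by
      intro h0; apply hε; rw [hm, h0, mul_zero]
    refine ⟨m, p, q, hm0, hpq, by rw [hA, hm]; ring, by rw [hB, hm]; ring,
      by rw [hC, hm]; ring, ?_⟩
    have h5 : p * d = p * (m * q ^ 3) := by rw [← key2, hm]; ring
    exact mul_left_cancel₀ hp0 h5

end Arith

section Builders

lemma typeI_core (x : Fin 4 → ℤ) (m p q : ℤ) (hm : 1 ≤ m) (hpq : IsCoprime p q)
    (h0 : x 0 = m * p ^ 3) (h1 : x 1 = 3 * (m * p ^ 2 * q)) (h2 : x 2 = 3 * (m * p * q ^ 2))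
    (h3 : x 3 = m * q ^ 3) : TypeI x := by
  obtain ⟨u, v, huv⟩ := hpq
  refine ⟨m, !![v, p; -u, q], hm, ?_, ?_⟩
  · simp only [Matrix.det_fin_two_of]; linarith [huv]
  · refine vec4_eq ?_ ?_ ?_ ?_ <;> simp [cubicAct, h0, h1, h2, h3] <;> ring

lemma typeI_build (x : Fin 4 → ℤ) (m p q : ℤ) (hm : m ≠ 0) (hpq : IsCoprime p q)
    (h0 : x 0 = m * p ^ 3) (h1 : x 1 = 3 * (m * p ^ 2 * q)) (h2 : x 2 = 3 * (m * p * q ^ 2))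
    (h3 : x 3 = m * q ^ 3) : TypeI x := by
  rcases lt_or_ge 0 m with hpos | hneg
  · exact typeI_core x m p q hpos hpq h0 h1 h2 h3
  · have hm1 : 1 ≤ -m := by rcases lt_or_eq_of_le hneg with h | h; omega; exact absurd h hm
    refine typeI_core x (-m) (-p) (-q) hm1 hpq.neg_neg ?_ ?_ ?_ ?_ <;>
      [rw [h0]; rw [h1]; rw [h2]; rw [h3]] <;> ring

lemma typeII_core (x : Fin 4 → ℤ) (m d1 : ℤ) (g : Matrix (Fin 2) (Fin 2) ℤ)
    (hg : g.det = 1) (hm : 1 ≤ m) (h : x = cubicAct g ![0, 0, 3 * m, d1]) : TypeII x := by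
  have h3m : (0:ℤ) < 3 * m := by linarith
  refine ⟨m, d1 % (3 * m), g * !![1, 0; d1 / (3 * m), 1], hm, Int.emod_nonneg d1 (by linarith),
    Int.emod_lt_of_pos d1 h3m, ?_, ?_⟩
  · rw [Matrix.det_mul, hg, Matrix.det_fin_two_of]; ring
  · have hdm := Int.mul_ediv_add_emod d1 (3 * m)
    have hvec : ![ (0:ℤ), 0, 3 * m, d1] =
        cubicAct !![1, 0; d1 / (3 * m), 1] ![0, 0, 3 * m, d1 % (3 * m)] := by
      refine vec4_eq ?_ ?_ ?_ ?_ <;> simp [cubicAct] <;> linarith [hdm]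
    rw [h, hvec, sdl_act_mul]

lemma typeII_build (x : Fin 4 → ℤ) (c1 d1 : ℤ) (δ : Matrix (Fin 2) (Fin 2) ℤ)
    (hδ : δ.det = 1) (h3 : (3:ℤ) ∣ c1) (hc : c1 ≠ 0)
    (h : cubicAct δ x = ![0, 0, c1, d1]) : TypeII x := by
  obtain ⟨m1, hm1⟩ := h3
  have hx : x = cubicAct (inv2 δ) ![0, 0, c1, d1] := by
    rw [← h, sdl_act_mul, (inv2_mul δ hδ).1, sdl_act_one]
  have hm10 : m1 ≠ 0 := by rintro rfl; exact hc (by rw [hm1]; ring)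
  rcases lt_or_ge 0 m1 with hpos | hneg
  · exact typeII_core x m1 d1 (inv2 δ) (inv2_det δ hδ) hpos (by rw [hx, hm1])
  · have hm11 : 1 ≤ -m1 := by omega
    have hneg : ![ (0:ℤ), 0, c1, d1] = cubicAct !![-1, 0; 0, -1] ![0, 0, 3 * -m1, -d1] := by
      refine vec4_eq ?_ ?_ ?_ ?_ <;> simp [cubicAct, hm1] <;> ring
    refine typeII_core x (-m1) (-d1) (inv2 δ * !![-1, 0; 0, -1]) ?_ hm11 ?_
    · rw [Matrix.det_mul, inv2_det δ hδ, Matrix.det_fin_two_of]; ring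
    · rw [hx, hneg, sdl_act_mul]

lemma act_lat (g : Matrix (Fin 2) (Fin 2) ℤ) (x : Fin 4 → ℤ) (B C : ℤ)
    (hB : x 1 = 3 * B) (hC : x 2 = 3 * C) :
    cubicAct g x 1 = 3 * (x 0 * g 0 0 ^ 2 * g 1 0 + B * (g 0 0 ^ 2 * g 1 1
        + 2 * g 0 0 * g 0 1 * g 1 0) + C * (2 * g 0 0 * g 0 1 * g 1 1 + g 1 0 * g 0 1 ^ 2)
        + x 3 * g 0 1 ^ 2 * g 1 1) ∧
    cubicAct g x 2 = 3 * (x 0 * g 0 0 * g 1 0 ^ 2 + B * (2 * g 0 0 * g 1 0 * g 1 1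
        + g 1 0 ^ 2 * g 0 1) + C * (g 0 0 * g 1 1 ^ 2 + 2 * g 1 0 * g 0 1 * g 1 1)
        + x 3 * g 0 1 * g 1 1 ^ 2) := by
  constructor <;> simp [cubicAct, hB, hC] <;> ring

end Builders
section Delta

/-- If `δ·(0,0,3m',n')` has first two coordinates zero-compatible equations and `m' ≥ 1`,
then `δ 0 1 = 0`. -/
lemma delta_col (δ : Matrix (Fin 2) (Fin 2) ℤ) (m' n' : ℤ) (hm' : 1 ≤ m')
    (hdet : δ 0 0 * δ 1 1 - δ 0 1 * δ 1 0 = 1)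
    (e0 : 3 * m' * δ 0 0 * δ 0 1 ^ 2 + n' * δ 0 1 ^ 3 = 0)
    (e1 : 6 * m' * δ 0 0 * δ 0 1 * δ 1 1 + 3 * m' * δ 1 0 * δ 0 1 ^ 2
      + 3 * n' * δ 0 1 ^ 2 * δ 1 1 = 0) : δ 0 1 = 0 := by
  by_contra h01
  have hsq : δ 0 1 ^ 2 ≠ 0 := pow_ne_zero 2 h01
  have hA : 3 * m' * δ 0 0 + n' * δ 0 1 = 0 := by
    have h5 : δ 0 1 ^ 2 * (3 * m' * δ 0 0 + n' * δ 0 1) = 0 := by linear_combination e0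
    rcases mul_eq_zero.mp h5 with h | h
    · exact absurd h hsq
    · exact h
  have hT : 3 * m' * δ 1 0 + n' * δ 1 1 = 0 := by
    have h5 : δ 0 1 ^ 2 * (3 * m' * δ 1 0 + n' * δ 1 1) = 0 := by
      linear_combination e1 - 2 * δ 0 1 * δ 1 1 * hA
    rcases mul_eq_zero.mp h5 with h | h
    · exact absurd h hsq
    · exact h
  have : 3 * m' = 0 := by
    linear_combination δ 1 1 * hA - δ 0 1 * hT - 3 * m' * hdet
  linarith

lemma delta_II_II (δ : Matrix (Fin 2) (Fin 2) ℤ) (m n m' n' : ℤ)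
    (hm : 1 ≤ m) (hn0 : 0 ≤ n) (hn3 : n < 3 * m)
    (hm' : 1 ≤ m') (hn0' : 0 ≤ n') (hn3' : n' < 3 * m')
    (hdet : δ.det = 1) (h : cubicAct δ ![0, 0, 3 * m', n'] = ![0, 0, 3 * m, n]) :
    m = m' ∧ n = n' ∧ δ = 1 := by
  rw [Matrix.det_fin_two] at hdet
  have e0 : 3 * m' * δ 0 0 * δ 0 1 ^ 2 + n' * δ 0 1 ^ 3 = 0 := by
    have h0 := congrFun h 0; simp [cubicAct] at h0; linear_combination h0
  have e1 : 6 * m' * δ 0 0 * δ 0 1 * δ 1 1 + 3 * m' * δ 1 0 * δ 0 1 ^ 2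
      + 3 * n' * δ 0 1 ^ 2 * δ 1 1 = 0 := by
    have h1 := congrFun h 1; simp [cubicAct] at h1; linear_combination h1
  have e2 : 3 * m' * δ 0 0 * δ 1 1 ^ 2 + 6 * m' * δ 1 0 * δ 0 1 * δ 1 1
      + 3 * n' * δ 0 1 * δ 1 1 ^ 2 = 3 * m := by
    have h2 := congrFun h 2; simp [cubicAct] at h2; linear_combination h2
  have e3 : 3 * m' * δ 1 0 * δ 1 1 ^ 2 + n' * δ 1 1 ^ 3 = n := by
    have h3 := congrFun h 3; simp [cubicAct] at h3; linear_combination h3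
  have h01 : δ 0 1 = 0 := delta_col δ m' n' hm' hdet e0 e1
  have hdet2 : δ 0 0 * δ 1 1 = 1 := by rw [h01] at hdet; linarith
  rcases Int.mul_eq_one_iff_eq_one_or_neg_one.mp hdet2 with ⟨ha, hb⟩ | ⟨ha, hb⟩
  · have hmm : m = m' := by rw [h01, ha, hb] at e2; linarith
    have h10 : δ 1 0 = 0 := by
      have hnn : 3 * m' * δ 1 0 = n - n' := by rw [hb] at e3; linarith
      rcases lt_trichotomy (δ 1 0) 0 with h | h | h
      · nlinarith
      · exact h
      · nlinarith
    have hnn : n = n' := by rw [h10] at e3; rw [hb] at e3; linarith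
    refine ⟨hmm, hnn, mat2_eq ?_ ?_ ?_ ?_⟩ <;> simp [ha, hb, h01, h10, Matrix.one_apply]
  · exfalso
    rw [h01, ha, hb] at e2
    nlinarith

lemma delta_I_I (δ : Matrix (Fin 2) (Fin 2) ℤ) (m m' : ℤ) (hm : 1 ≤ m) (hm' : 1 ≤ m')
    (hdet : δ.det = 1) (h : cubicAct δ ![0, 0, 0, m'] = ![0, 0, 0, m]) :
    m = m' ∧ δ = !![1, 0; δ 1 0, 1] := by
  rw [Matrix.det_fin_two] at hdet
  have e3 : m' * δ 1 1 ^ 3 = m := by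
    have h3 := congrFun h 3; simp [cubicAct] at h3; linear_combination h3
  have h01 : δ 0 1 = 0 := by
    have h0 := congrFun h 0; simp [cubicAct] at h0
    rcases h0 with hh | hh
    · exact absurd hh (by linarith)
    · exact hh
  have hdet2 : δ 0 0 * δ 1 1 = 1 := by rw [h01] at hdet; linarith
  rcases Int.mul_eq_one_iff_eq_one_or_neg_one.mp hdet2 with ⟨ha, hb⟩ | ⟨ha, hb⟩
  · have hmm : m = m' := by rw [hb] at e3; linarith
    refine ⟨hmm, mat2_eq ?_ ?_ ?_ ?_⟩ <;> simp [ha, hb, h01]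
  · exfalso; rw [hb] at e3; nlinarith

lemma delta_I_II (δ : Matrix (Fin 2) (Fin 2) ℤ) (m m' n' : ℤ) (hm : 1 ≤ m) (hm' : 1 ≤ m')
    (hdet : δ.det = 1) (h : cubicAct δ ![0, 0, 3 * m', n'] = ![0, 0, 0, m]) : False := by
  rw [Matrix.det_fin_two] at hdet
  have e0 : 3 * m' * δ 0 0 * δ 0 1 ^ 2 + n' * δ 0 1 ^ 3 = 0 := by
    have h0 := congrFun h 0; simp [cubicAct] at h0; linear_combination h0
  have e1 : 6 * m' * δ 0 0 * δ 0 1 * δ 1 1 + 3 * m' * δ 1 0 * δ 0 1 ^ 2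
      + 3 * n' * δ 0 1 ^ 2 * δ 1 1 = 0 := by
    have h1 := congrFun h 1; simp [cubicAct] at h1; linear_combination h1
  have e2 : 3 * m' * δ 0 0 * δ 1 1 ^ 2 + 6 * m' * δ 1 0 * δ 0 1 * δ 1 1
      + 3 * n' * δ 0 1 * δ 1 1 ^ 2 = 0 := by
    have h2 := congrFun h 2; simp [cubicAct] at h2; linear_combination h2
  have h01 : δ 0 1 = 0 := delta_col δ m' n' hm' hdet e0 e1
  have hdet2 : δ 0 0 * δ 1 1 = 1 := by rw [h01] at hdet; linarith
  have h2' : 3 * m' * δ 0 0 * δ 1 1 ^ 2 = 0 := by rw [h01] at e2; linarith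
  have h3' : δ 1 1 * (3 * m' * (δ 0 0 * δ 1 1)) = 0 := by linear_combination h2'
  rw [hdet2, mul_one] at h3'
  rcases mul_eq_zero.mp h3' with hh | hh
  · rw [hh, mul_zero] at hdet2; exact absurd hdet2 (by norm_num)
  · linarith

end Delta
section Classify

lemma forward_classify (x : Fin 4 → ℤ) (hb : (3:ℤ) ∣ x 1) (hc : (3:ℤ) ∣ x 2)
    (hdisc : cubicDisc x = 0) (hx : x ≠ 0) : TypeI x ∨ TypeII x := by
  obtain ⟨B, hB⟩ := hb
  obtain ⟨C, hC⟩ := hc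
  have hkey : (B * C - x 0 * x 3) ^ 2
      = 4 * ((B ^ 2 - x 0 * C) * (C ^ 2 - B * x 3)) := by
    have h27 : (27:ℤ) * ((B * C - x 0 * x 3) ^ 2)
        = 27 * (4 * ((B ^ 2 - x 0 * C) * (C ^ 2 - B * x 3))) := by
      have hd2 := hdisc
      simp only [cubicDisc] at hd2
      rw [hB, hC] at hd2
      linear_combination -hd2
    exact mul_left_cancel₀ (by norm_num) h27
  by_cases hall : B ^ 2 - x 0 * C = 0 ∧ B * C - x 0 * x 3 = 0 ∧ C ^ 2 - B * x 3 = 0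
  · obtain ⟨hP, hQ, hR⟩ := hall
    left
    rcases eq_or_ne (x 0) 0 with ha0 | ha0
    · have hB0 : B = 0 := by
        have h2 : B ^ 2 = 0 := by rw [ha0] at hP; linarith
        exact pow_eq_zero_iff two_ne_zero |>.mp h2
      have hC0 : C = 0 := by
        have h2 : C ^ 2 = 0 := by rw [hB0] at hR; linarith
        exact pow_eq_zero_iff two_ne_zero |>.mp h2
      have hd0 : x 3 ≠ 0 := by
        intro h0
        apply hx
        refine vec4_eq ?_ ?_ ?_ ?_ <;> simp [hB, hC, hB0, hC0, ha0, h0]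
      refine typeI_build x (x 3) 0 1 hd0 (isCoprime_zero_left.mpr isUnit_one)
        (by rw [ha0]; ring) (by rw [hB, hB0]; ring) (by rw [hC, hC0]; ring) (by ring)
    · obtain ⟨m, p, q, hm, hpq, h1, h2, h3, h4⟩ :=
        step_tc (x 0) B C (x 3) (by linarith) (by linarith) (by linarith) ha0
      exact typeI_build x m p q hm hpq h1 (by rw [hB, h2]) (by rw [hC, h3]) h4
  · right
    have hsplit : ∃ ε p q : ℤ, ε ≠ 0 ∧ IsCoprime p q ∧ B ^ 2 - x 0 * C = ε * p ^ 2 ∧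
        B * C - x 0 * x 3 = 2 * (ε * p * q) ∧ C ^ 2 - B * x 3 = ε * q ^ 2 := by
      rcases eq_or_ne (B ^ 2 - x 0 * C) 0 with hP0 | hP0
      · have hQ0 : B * C - x 0 * x 3 = 0 := by
          have h2 : (B * C - x 0 * x 3) ^ 2 = 0 := by rw [hP0] at hkey; linarith
          exact pow_eq_zero_iff two_ne_zero |>.mp h2
        have hR0 : C ^ 2 - B * x 3 ≠ 0 := fun h0 => hall ⟨hP0, hQ0, h0⟩
        exact ⟨C ^ 2 - B * x 3, 0, 1, hR0, isCoprime_zero_left.mpr isUnit_one,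
          by rw [hP0]; ring, by rw [hQ0]; ring, by ring⟩
      · have hev : Even (B * C - x 0 * x 3) := by
          have h2 : Even ((B * C - x 0 * x 3) ^ 2) :=
            ⟨2 * ((B ^ 2 - x 0 * C) * (C ^ 2 - B * x 3)), by linarith⟩
          exact (Int.even_pow.mp h2).1
        obtain ⟨Q1, hQ1⟩ := hev
        have hQsq : Q1 ^ 2 = (B ^ 2 - x 0 * C) * (C ^ 2 - B * x 3) := by
          have h4 : (4:ℤ) * (Q1 ^ 2) = 4 * ((B ^ 2 - x 0 * C) * (C ^ 2 - B * x 3)) := by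
            linear_combination hkey - (B * C - x 0 * x 3 + 2 * Q1) * hQ1
          exact mul_left_cancel₀ (by norm_num) h4
        obtain ⟨ε, p, q, hε, hp0, hpq, hPe, hQe, hRe⟩ :=
          step_sq (B ^ 2 - x 0 * C) Q1 (C ^ 2 - B * x 3) hQsq hP0
        exact ⟨ε, p, q, hε, hpq, hPe, by rw [hQ1, hQe]; ring, hRe⟩
    obtain ⟨ε, p, q, hε, hpq, hPe, hQe, hRe⟩ := hsplit
    obtain ⟨u, v, huv⟩ := hpq
    have hδdet : (!![q, -p; u, v] : Matrix (Fin 2) (Fin 2) ℤ).det = 1 := by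
      rw [Matrix.det_fin_two_of]; linarith
    obtain ⟨y, hy⟩ : ∃ y, y = cubicAct !![q, -p; u, v] x := ⟨_, rfl⟩
    have hhx : hess x = (9 * (ε * p ^ 2), 9 * (2 * (ε * p * q)), 9 * (ε * q ^ 2)) := by
      simp only [hess, Prod.mk.injEq]
      refine ⟨by rw [hB, hC]; linear_combination 9 * hPe,
        by rw [hB, hC]; linear_combination 9 * hQe,
        by rw [hB, hC]; linear_combination 9 * hRe⟩
    have H := sdl_hess_act !![q, -p; u, v] x
    rw [hδdet, hhx, ← hy] at H
    have Hy1 := congrArg Prod.fst H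
    have Hy2 := congrArg (fun z : ℤ × ℤ × ℤ => z.2.1) H
    have Hy3 := congrArg (fun z : ℤ × ℤ × ℤ => z.2.2) H
    simp only [hess, quadAct] at Hy1 Hy2 Hy3
    simp only [Matrix.cons_val', Matrix.cons_val_zero, Matrix.cons_val_one, Matrix.head_cons,
      Matrix.empty_val', Matrix.cons_val_fin_one, Matrix.head_fin_const,
      Matrix.of_apply] at Hy1 Hy2 Hy3
    have k1 : y 1 ^ 2 - 3 * y 0 * y 2 = 0 := by linear_combination Hy1
    have k2 : y 1 * y 2 - 9 * y 0 * y 3 = 0 := by linear_combination Hy2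
    have k3 : y 2 ^ 2 - 3 * y 1 * y 3 = 9 * ε := by
      linear_combination Hy3 + 9 * ε * (u * p + v * q + 1) * huv
    have hl := act_lat !![q, -p; u, v] x B C hB hC
    rw [← hy] at hl
    obtain ⟨B1, hB1⟩ : ∃ t, y 1 = 3 * t := ⟨_, hl.1⟩
    obtain ⟨C1, hC1⟩ : ∃ t, y 2 = 3 * t := ⟨_, hl.2⟩
    have e1 : B1 ^ 2 = y 0 * C1 := by
      have h9 : (9:ℤ) * (B1 ^ 2) = 9 * (y 0 * C1) := by
        rw [hB1, hC1] at k1; linear_combination k1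
      exact mul_left_cancel₀ (by norm_num) h9
    have e2 : B1 * C1 = y 0 * y 3 := by
      have h9 : (9:ℤ) * (B1 * C1) = 9 * (y 0 * y 3) := by
        rw [hB1, hC1] at k2; linear_combination k2
      exact mul_left_cancel₀ (by norm_num) h9
    have e3 : C1 ^ 2 - B1 * y 3 = ε := by
      have h9 : (9:ℤ) * (C1 ^ 2 - B1 * y 3) = 9 * ε := by
        rw [hB1, hC1] at k3; linear_combination k3
      exact mul_left_cancel₀ (by norm_num) h9
    have ha1 : y 0 = 0 := by
      have h0 : y 0 * ε = 0 := by
        linear_combination (-C1) * e1 + B1 * e2 + (-(y 0)) * e3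
      rcases mul_eq_zero.mp h0 with h | h
      · exact h
      · exact absurd h hε
    have hb1 : B1 = 0 := by
      have h2 : B1 ^ 2 = 0 := by rw [ha1] at e1; linarith
      exact pow_eq_zero_iff two_ne_zero |>.mp h2
    have hC1ne : C1 ≠ 0 := by
      intro h0; apply hε; rw [h0, hb1] at e3; linarith
    have hy2ne : y 2 ≠ 0 := by
      rw [hC1]; exact mul_ne_zero (by norm_num) hC1ne
    have hyvec : cubicAct !![q, -p; u, v] x = ![0, 0, y 2, y 3] := by
      rw [← hy]
      refine vec4_eq ?_ ?_ ?_ ?_ <;> simp [ha1, hB1, hb1]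
    exact typeII_build x (y 2) (y 3) !![q, -p; u, v] hδdet ⟨C1, hC1⟩ hy2ne hyvec

end Classify

/-- Shintani's description of the singular dual forms: `L̂₀ = {x ∈ L̂ : D(x) = 0}` is the
disjoint union of `{0}`, the forms `γ·(0,0,0,m)` (with `m ≥ 1` unique and `γ` unique modulo
`Γ ∩ N`), and the forms `γ·(0,0,3m,n)` (with the triple `(m,n,γ)`, `m ≥ 1`, `0 ≤ n < 3m`,
unique). -/
theorem singular_dual_lattice_description :
    (∀ x : Fin 4 → ℤ,
      ((3 : ℤ) ∣ x 1 ∧ (3 : ℤ) ∣ x 2 ∧ cubicDisc x = 0) ↔ (x = 0 ∨ TypeI x ∨ TypeII x)) ∧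
    (∀ x : Fin 4 → ℤ, TypeI x → x ≠ 0) ∧
    (∀ x : Fin 4 → ℤ, TypeII x → x ≠ 0) ∧
    (∀ x : Fin 4 → ℤ, ¬(TypeI x ∧ TypeII x)) ∧
    (∀ (m m' : ℤ) (γ γ' : Matrix (Fin 2) (Fin 2) ℤ),
      1 ≤ m → 1 ≤ m' → γ.det = 1 → γ'.det = 1 →
      cubicAct γ ![0, 0, 0, m] = cubicAct γ' ![0, 0, 0, m'] →
      m = m' ∧ ∃ k : ℤ, γ' = γ * !![1, 0; k, 1]) ∧
    (∀ (m n m' n' : ℤ) (γ γ' : Matrix (Fin 2) (Fin 2) ℤ),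
      1 ≤ m → 0 ≤ n → n < 3 * m → γ.det = 1 →
      1 ≤ m' → 0 ≤ n' → n' < 3 * m' → γ'.det = 1 →
      cubicAct γ ![0, 0, 3 * m, n] = cubicAct γ' ![0, 0, 3 * m', n'] →
      m = m' ∧ n = n' ∧ γ = γ') := by
  refine ⟨?_, ?_, ?_, ?_, ?_, ?_⟩
  · -- part 1
    intro x
    constructor
    · rintro ⟨hb, hc, hd⟩
      rcases eq_or_ne x 0 with h0 | h0
      · exact Or.inl h0
      · exact Or.inr (forward_classify x hb hc hd h0)
    · rintro (h0 | ⟨m, γ, hm, hγ, hx⟩ | ⟨m, n, γ, hm, hn0, hn3, hγ, hx⟩)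
      · rw [h0]; refine ⟨by simp, by simp, by simp [cubicDisc]⟩
      · have hl := act_lat γ ![0, 0, 0, m] 0 0 (by simp) (by simp)
        refine ⟨by rw [hx]; exact ⟨_, hl.1⟩, by rw [hx]; exact ⟨_, hl.2⟩, ?_⟩
        rw [hx, sdl_disc_act, hγ]
        simp [cubicDisc]
      · have hl := act_lat γ ![0, 0, 3 * m, n] 0 m (by simp) (by simp)
        refine ⟨by rw [hx]; exact ⟨_, hl.1⟩, by rw [hx]; exact ⟨_, hl.2⟩, ?_⟩
        rw [hx, sdl_disc_act, hγ]
        simp [cubicDisc]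
  · -- part 2 : TypeI nonzero
    rintro x ⟨m, γ, hm, hγ, hx⟩ h0
    have h3 := sdl_act_mul (inv2 γ) γ ![0, 0, 0, m]
    rw [(inv2_mul γ hγ).1, sdl_act_one, ← hx, h0, sdl_act_zero] at h3
    have h4 := congrFun h3.symm 3
    simp at h4
    omega
  · -- part 3 : TypeII nonzero
    rintro x ⟨m, n, γ, hm, hn0, hn3, hγ, hx⟩ h0
    have h3 := sdl_act_mul (inv2 γ) γ ![0, 0, 3 * m, n]
    rw [(inv2_mul γ hγ).1, sdl_act_one, ← hx, h0, sdl_act_zero] at h3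
    have h4 := congrFun h3.symm 2
    simp at h4
    omega
  · -- part 4 : disjoint
    rintro x ⟨⟨m, γ, hm, hγ, hx⟩, ⟨m', n', γ', hm', hn0', hn3', hγ', hx'⟩⟩
    have h := sdl_act_cancel (hx.symm.trans hx') hγ
    have hdet : (inv2 γ * γ').det = 1 := by
      rw [Matrix.det_mul, inv2_det γ hγ, hγ', one_mul]
    exact delta_I_II (inv2 γ * γ') m m' n' hm hm' hdet h.symm
  · -- part 5 : TypeI uniqueness
    intro m m' γ γ' hm hm' hγ hγ' hEq
    have h := sdl_act_cancel hEq hγ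
    have hdet : (inv2 γ * γ').det = 1 := by
      rw [Matrix.det_mul, inv2_det γ hγ, hγ', one_mul]
    obtain ⟨hmm, hδeq⟩ := delta_I_I (inv2 γ * γ') m m' hm hm' hdet h.symm
    refine ⟨hmm, (inv2 γ * γ') 1 0, ?_⟩
    rw [← hδeq, ← mul_assoc, (inv2_mul γ hγ).2, one_mul]
  · -- part 6 : TypeII uniqueness
    intro m n m' n' γ γ' hm hn0 hn3 hγ hm' hn0' hn3' hγ' hEq
    have h := sdl_act_cancel hEq hγ
    have hdet : (inv2 γ * γ').det = 1 := by
      rw [Matrix.det_mul, inv2_det γ hγ, hγ', one_mul]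
    obtain ⟨hmm, hnn, hδ1⟩ := delta_II_II (inv2 γ * γ') m n m' n'
      hm hn0 hn3 hm' hn0' hn3' hdet h.symm
    refine ⟨hmm, hnn, ?_⟩
    have h7 : γ * (inv2 γ * γ') = γ' := by rw [← mul_assoc, (inv2_mul γ hγ).2, one_mul]
    rw [← h7, hδ1, mul_one]
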